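/- Let f₀ : {0,1}^p → ℝ have multilinear expansion with coefficients β_J. Suppose that g_J(x_{J^c}) — the partial difference of f₀ with respect to J — is constant on {0,1}^{J^c}. Then f₀ possesses no statistical interaction J ∪ {j'} for any j' ∈ J^c; that is, for each such j', f₀ can be written as a sum of functions each of which omits at least one coordinate of J ∪ {j'}. -/
import Mathlib


theorem stmt_10 (p : ℕ) (f₀ β : Finset (Fin p) → ℝ) (J : Finset (Fin p))
    (hexp : ∀ S : Finset (Fin p), f₀ S = ∑ T ∈ S.powerset, β T)
    (hconst : ∀ S₁ ⊆ Jᶜ, ∀ S₂ ⊆ Jᶜ,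
      (∑ J₂ ∈ S₁.powerset, β (J ∪ J₂)) = ∑ J₂ ∈ S₂.powerset, β (J ∪ J₂)) :
    ∀ j' ∉ J, ∃ F : Fin p → Finset (Fin p) → ℝ,
      (∀ ℓ ∈ insert j' J, ∀ S : Finset (Fin p), F ℓ S = F ℓ (S.erase ℓ)) ∧
      (∀ S : Finset (Fin p), f₀ S = ∑ ℓ ∈ insert j' J, F ℓ S) := by
  intro j' hj'
  classical
  set K : Finset (Fin p) := insert j' J with hK
  -- Step 1: the telescoping sums vanish
  have hsum : ∀ A : Finset (Fin p), A ⊆ Kᶜ → ∑ J₂ ∈ A.powerset, β (K ∪ J₂) = 0 := by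
    intro A hA
    have hj'A : j' ∉ A := fun h => by
      have := hA h; simp [hK] at this
    have hAJ : A ⊆ Jᶜ := by
      intro x hx
      have := hA hx
      simp [hK] at this ⊢
      exact this.2
    have h1 : insert j' A ⊆ Jᶜ := by
      intro x hx
      rcases Finset.mem_insert.1 hx with rfl | hx
      · simpa using hj'
      · exact hAJ hx
    have key := hconst (insert j' A) h1 A hAJ
    rw [Finset.powerset_insert, Finset.sum_union] at key
    · have himg : ∑ J₂ ∈ A.powerset.image (insert j'), β (J ∪ J₂)
          = ∑ J₂ ∈ A.powerset, β (K ∪ J₂) := by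
        rw [Finset.sum_image]
        · apply Finset.sum_congr rfl
          intro B _
          congr 1
          rw [hK]
          rw [Finset.union_insert, Finset.insert_union]
        · intro B hB C hC h
          have hB' : j' ∉ B := fun hb => hj'A (Finset.mem_powerset.1 hB hb)
          have hC' : j' ∉ C := fun hc => hj'A (Finset.mem_powerset.1 hC hc)
          have : (insert j' B).erase j' = (insert j' C).erase j' := by rw [h]
          rwa [Finset.erase_insert hB', Finset.erase_insert hC'] at this
      linarith [key, himg]
    · rw [Finset.disjoint_right]
      intro B hB hB'
      rcases Finset.mem_image.1 hB with ⟨C, _, rfl⟩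
      exact hj'A (Finset.mem_powerset.1 hB' (Finset.mem_insert_self _ _))
  -- Step 2: β vanishes on supersets of K (Möbius inversion / strong induction)
  have hzero : ∀ A : Finset (Fin p), A ⊆ Kᶜ → β (K ∪ A) = 0 := by
    intro A
    induction A using Finset.strongInduction with
    | _ A ih =>
      intro hA
      have h := hsum A hA
      rw [← Finset.add_sum_erase _ _ (Finset.mem_powerset_self A)] at h
      have h2 : ∑ B ∈ A.powerset.erase A, β (K ∪ B) = 0 := by
        apply Finset.sum_eq_zero
        intro B hB
        have hB1 := Finset.mem_powerset.1 (Finset.mem_of_mem_erase hB)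
        have hB2 := Finset.ne_of_mem_erase hB
        exact ih B (Finset.ssubset_iff_subset_ne.2 ⟨hB1, hB2⟩) (hB1.trans hA)
      rw [h2, add_zero] at h
      exact h
  -- Step 3: supersets of K have β = 0
  have hzero' : ∀ T : Finset (Fin p), K ⊆ T → β T = 0 := by
    intro T hT
    have := hzero (T \ K) (by intro x hx; simp [Finset.mem_sdiff] at hx; simp [Finset.mem_compl, hx.2])
    rwa [Finset.union_sdiff_of_subset hT] at this
  -- Step 4: choice function
  set c : Finset (Fin p) → Fin p :=
    fun T => if h : (K \ T).Nonempty then (K \ T).min' h else j' with hc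
  refine ⟨fun ℓ S => ∑ T ∈ S.powerset.filter (fun T => c T = ℓ ∧ ℓ ∉ T), β T, ?_, ?_⟩
  · intro ℓ _ S
    apply Finset.sum_congr _ (fun _ _ => rfl)
    ext T
    simp only [Finset.mem_filter, Finset.mem_powerset, Finset.subset_erase]
    tauto
  · intro S
    rw [hexp S]
    have hswap : ∀ ℓ, ∑ T ∈ S.powerset.filter (fun T => c T = ℓ ∧ ℓ ∉ T), β T
        = ∑ T ∈ S.powerset, if c T = ℓ ∧ ℓ ∉ T then β T else 0 :=
      fun ℓ => Finset.sum_filter _ _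
    simp_rw [hswap]
    rw [Finset.sum_comm]
    apply Finset.sum_congr rfl
    intro T _
    by_cases h : (K \ T).Nonempty
    · have hcT : c T = (K \ T).min' h := by simp [hc, h]
      have hmem : c T ∈ K \ T := hcT ▸ Finset.min'_mem _ h
      have hK1 : c T ∈ K := (Finset.mem_sdiff.1 hmem).1
      have hT1 : c T ∉ T := (Finset.mem_sdiff.1 hmem).2
      rw [Finset.sum_eq_single_of_mem (c T) hK1]
      · simp [hT1]
      · intro ℓ _ hne
        simp only [ite_eq_right_iff]
        intro hh
        exact absurd hh.1 (fun e => hne e.symm)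
    · have hKT : K ⊆ T := by
        intro x hx
        by_contra hxT
        exact h ⟨x, Finset.mem_sdiff.2 ⟨hx, hxT⟩⟩
      rw [hzero' T hKT]
      simp
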